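/- A reflexive graph 𝒜 is univalent if and only if its opposite 𝒜ᵒᵖ is univalent. -/

import Mathlib

/-- A reflexive graph: a type of vertices, a family of edge types, and
reflexivity data. -/
structure RxGraph where
  V : Type*
  Edge : V → V → Type*
  rx : ∀ x, Edge x x

/-- The fan of a vertex `x`: vertices equipped with an edge from `x`. -/
def RxGraph.Fan (A : RxGraph) (x : A.V) : Type _ :=
  Σ y, A.Edge x y

/-- The co-fan of a vertex `x`: vertices equipped with an edge toward `x`. -/
def RxGraph.CoFan (A : RxGraph) (x : A.V) : Type _ :=
  Σ y, A.Edge y x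

/-- A reflexive graph is univalent (a path object) when every fan is a
subsingleton. -/
def RxGraph.Univalent (A : RxGraph) : Prop :=
  ∀ x, Subsingleton (A.Fan x)

/-- The opposite reflexive graph: same vertices, edges reversed, same
reflexivity data. -/
def RxGraph.op (A : RxGraph) : RxGraph where
  V := A.V
  Edge := fun x y => A.Edge y x
  rx := A.rx

lemma RxGraph.op_univalent_of_univalent (A : RxGraph) (h : A.Univalent) :
    A.op.Univalent := by
  intro x
  constructor
  rintro ⟨y, e⟩ ⟨z, f⟩
  -- e : A.Edge y x, f : A.Edge z x
  have he : (⟨x, e⟩ : A.Fan y) = ⟨y, A.rx y⟩ := (h y).elim _ _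
  have hf : (⟨x, f⟩ : A.Fan z) = ⟨z, A.rx z⟩ := (h z).elim _ _
  obtain ⟨h1, h2⟩ := Sigma.mk.inj_iff.mp he
  obtain ⟨h3, h4⟩ := Sigma.mk.inj_iff.mp hf
  subst h1
  subst h3
  have : e = A.rx x := eq_of_heq h2
  have : f = A.rx x := eq_of_heq h4
  simp_all
  rfl

/-- A reflexive graph is univalent iff its opposite is univalent. -/
theorem univalent_iff_op_univalent (A : RxGraph) :
    A.Univalent ↔ A.op.Univalent := by
  constructor
  · exact A.op_univalent_of_univalent
  · exact fun h => A.op.op_univalent_of_univalent h
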